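/- Let a₁, a₂, b₁, b₂, d, λ̄ ∈ ℝ, let Γ = [[a₁,b₁],[b₂,a₂]] and H₀ = [[1,−1],[−1,1]] be real 2×2 matrices, let M = −d·I₄ + λ̄·(Γ⊗H₀) with ⊗ the Kronecker product, and let s ∈ ℂ satisfy s² = (a₁−a₂)² + 4·b₁·b₂. Then a complex number μ is an eigenvalue of M (regarded as a complex matrix) if and only if μ = −d or μ = −d + λ̄·((a₁+a₂) + s) or μ = −d + λ̄·((a₁+a₂) − s). -/

import Mathlib

open Kronecker

/-- `μ` is an eigenvalue of the complex square matrix `M`: there is a nonzero vector `v`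
with `M ⬝ v = μ • v` (equivalently, `μ` is a root of the characteristic polynomial). -/
def IsEigenvalue {n : Type*} [Fintype n] (M : Matrix n n ℂ) (μ : ℂ) : Prop :=
  ∃ v : n → ℂ, v ≠ 0 ∧ M.mulVec v = μ • v

/-- Spectral formula for the linearized game-induced opinion dynamics: the eigenvalues of
`M = −d·I₄ + λ̄·(Γ ⊗ H₀)`, with `Γ = [[a₁,b₁],[b₂,a₂]]`, `H₀ = [[1,−1],[−1,1]]`, and
`s² = (a₁−a₂)² + 4b₁b₂`, are exactly `−d` and `−d + λ̄·((a₁+a₂) ± s)`. -/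
theorem eigenvalues_linearized_GiNOD (a₁ a₂ b₁ b₂ d lam : ℝ) (s : ℂ)
    (hs : s ^ 2 = (((a₁ - a₂) ^ 2 + 4 * b₁ * b₂ : ℝ) : ℂ))
    (M : Matrix (Fin 2 × Fin 2) (Fin 2 × Fin 2) ℝ)
    (hM : M = (-d) • (1 : Matrix (Fin 2 × Fin 2) (Fin 2 × Fin 2) ℝ) +
      lam • (!![a₁, b₁; b₂, a₂] ⊗ₖ !![(1 : ℝ), -1; -1, 1]))
    (μ : ℂ) :
    IsEigenvalue (M.map Complex.ofReal) μ ↔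
      μ = -(d : ℂ) ∨ μ = -(d : ℂ) + (lam : ℂ) * (((a₁ : ℂ) + a₂) + s) ∨
        μ = -(d : ℂ) + (lam : ℂ) * (((a₁ : ℂ) + a₂) - s) := by
  have h1 : IsEigenvalue (M.map Complex.ofReal) μ ↔
      (M.map Complex.ofReal - μ • 1).det = 0 := by
    rw [← Matrix.exists_mulVec_eq_zero_iff]
    unfold IsEigenvalue
    constructor <;> rintro ⟨v, hv, he⟩ <;> refine ⟨v, hv, ?_⟩
    · rw [Matrix.sub_mulVec, he, Matrix.smul_mulVec, Matrix.one_mulVec, sub_self]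
    · rw [Matrix.sub_mulVec, Matrix.smul_mulVec, Matrix.one_mulVec, sub_eq_zero] at he
      exact he
  have hdet : (M.map Complex.ofReal - μ • 1).det =
      (-(d:ℂ) - μ)^2 * ((-(d:ℂ) + (lam:ℂ) * (((a₁:ℂ) + a₂) + s)) - μ) *
        ((-(d:ℂ) + (lam:ℂ) * (((a₁:ℂ) + a₂) - s)) - μ) := by
    rw [← Matrix.det_submatrix_equiv_self finProdFinEquiv.symm]
    subst hM
    simp [Matrix.det_succ_row_zero, Fin.sum_univ_succ, Matrix.submatrix_apply, finProdFinEquiv,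
      Matrix.one_apply, Fin.divNat, Fin.modNat, Matrix.kroneckerMap_apply, Prod.ext_iff,
      Fin.succAbove]
    have hs' : s^2 = ((a₁:ℂ)-a₂)^2 + 4*b₁*b₂ := by push_cast at hs; exact hs
    linear_combination ((lam:ℂ))^2 * (-(d:ℂ) - μ)^2 * hs'
  rw [h1, hdet, mul_eq_zero, mul_eq_zero, pow_eq_zero_iff two_ne_zero, sub_eq_zero,
    sub_eq_zero, sub_eq_zero]
  constructor
  · rintro ((h | h) | h)
    · exact Or.inl h.symm
    · exact Or.inr (Or.inl h.symm)
    · exact Or.inr (Or.inr h.symm)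
  · rintro (h | h | h)
    · exact Or.inl (Or.inl h.symm)
    · exact Or.inl (Or.inr h.symm)
    · exact Or.inr h.symm
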